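/- Let P, Q, R be three probability distributions on a finite set Z, with Q and R strictly positive on Z. Then for any γ ∈ (0, 1) and any α > 1, the following inequality holds: [d_α(P ‖ Q)]^(α−1) ≤ [d_{α/γ}(P ‖ R)]^(α−γ) · [d_{(α−γ)/(1−γ)}(R ‖ Q)]^(α−1). -/

import Mathlib

open scoped BigOperators

/-- Exponential Rényi divergence `d_β(P ‖ Q)` between functions on a finite set. -/
noncomputable def expRenyi {Z : Type*} [Fintype Z] (β : ℝ) (P Q : Z → ℝ) : ℝ :=
  (∑ z, P z ^ β / Q z ^ (β - 1)) ^ (1 / (β - 1))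

/-- Triangle-type inequality for exponential Rényi divergences
(Proposition 2 of the paper, with α > 1). -/
theorem renyi_triangle_inequality {Z : Type*} [Fintype Z] [Nonempty Z]
    (P Q R : Z → ℝ)
    (hP : ∀ z, 0 ≤ P z) (hPsum : ∑ z, P z = 1)
    (hQpos : ∀ z, 0 < Q z) (hQsum : ∑ z, Q z = 1)
    (hRpos : ∀ z, 0 < R z) (hRsum : ∑ z, R z = 1)
    (γ : ℝ) (hγ0 : 0 < γ) (hγ1 : γ < 1)
    (α : ℝ) (hα : 1 < α) :
    expRenyi α P Q ^ (α - 1) ≤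
      expRenyi (α / γ) P R ^ (α - γ) *
        expRenyi ((α - γ) / (1 - γ)) R Q ^ (α - 1) := by
  have hαγ : (0:ℝ) < α - γ := by linarith
  have hα1 : (0:ℝ) < α - 1 := by linarith
  have h1γ : (0:ℝ) < 1 - γ := by linarith
  set f : Z → ℝ := fun z => P z ^ α / R z ^ (α - γ) with hf
  set g : Z → ℝ := fun z => R z ^ (α - γ) / Q z ^ (α - 1) with hg
  have hfnn : ∀ z, 0 ≤ f z := fun z =>
    div_nonneg (Real.rpow_nonneg (hP z) _) (Real.rpow_nonneg (hRpos z).le _)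
  have hgnn : ∀ z, 0 ≤ g z := fun z =>
    div_nonneg (Real.rpow_nonneg (hRpos z).le _) (Real.rpow_nonneg (hQpos z).le _)
  have hconj : Real.HolderConjugate (1/γ) (1/(1-γ)) := by
    rw [Real.holderConjugate_iff]
    constructor
    · rw [lt_div_iff₀ hγ0]; linarith
    · simp only [one_div, inv_inv]; ring
  -- Hölder
  have key := Real.inner_le_Lp_mul_Lq Finset.univ f g hconj
  -- simplify abs
  have habsf : ∀ z : Z, |f z| = f z := fun z => abs_of_nonneg (hfnn z)
  have habsg : ∀ z : Z, |g z| = g z := fun z => abs_of_nonneg (hgnn z)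
  simp only [habsf, habsg] at key
  -- identify LHS
  have hLHS : ∑ z, P z ^ α / Q z ^ (α - 1) = ∑ z : Z, f z * g z := by
    refine Finset.sum_congr rfl fun z _ => ?_
    rw [hf, hg, div_mul_div_comm, div_eq_div_iff
      (by exact (Real.rpow_pos_of_pos (hQpos z) _).ne')
      (by exact (mul_pos (Real.rpow_pos_of_pos (hRpos z) _) (Real.rpow_pos_of_pos (hQpos z) _)).ne')]
    ring
  -- identify the two Hölder factors with the Rényi sums
  have hfp : ∀ z : Z, f z ^ (1/γ) = P z ^ (α/γ) / R z ^ (α/γ - 1) := by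
    intro z
    rw [hf, Real.div_rpow (Real.rpow_nonneg (hP z) _) (Real.rpow_nonneg (hRpos z).le _),
      ← Real.rpow_mul (hP z), ← Real.rpow_mul (hRpos z).le,
      show α * (1/γ) = α/γ by ring, show (α - γ) * (1/γ) = α/γ - 1 by field_simp]
  have hgq : ∀ z : Z, g z ^ (1/(1-γ)) = R z ^ ((α-γ)/(1-γ)) / Q z ^ ((α-γ)/(1-γ) - 1) := by
    intro z
    rw [hg, Real.div_rpow (Real.rpow_nonneg (hRpos z).le _) (Real.rpow_nonneg (hQpos z).le _),
      ← Real.rpow_mul (hRpos z).le, ← Real.rpow_mul (hQpos z).le]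
    rw [show (α - γ) * (1/(1-γ)) = (α-γ)/(1-γ) by ring,
      show (α - 1) * (1/(1-γ)) = (α-γ)/(1-γ) - 1 by field_simp; ring]
  simp only [hfp, hgq] at key
  -- nonnegativity of the sums
  have hS0 : (0:ℝ) ≤ ∑ z, P z ^ α / Q z ^ (α - 1) :=
    Finset.sum_nonneg fun z _ =>
      div_nonneg (Real.rpow_nonneg (hP z) _) (Real.rpow_nonneg (hQpos z).le _)
  have hS1 : (0:ℝ) ≤ ∑ z, P z ^ (α/γ) / R z ^ (α/γ - 1) :=
    Finset.sum_nonneg fun z _ =>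
      div_nonneg (Real.rpow_nonneg (hP z) _) (Real.rpow_nonneg (hRpos z).le _)
  have hS2 : (0:ℝ) ≤ ∑ z, R z ^ ((α-γ)/(1-γ)) / Q z ^ ((α-γ)/(1-γ) - 1) :=
    Finset.sum_nonneg fun z _ =>
      div_nonneg (Real.rpow_nonneg (hRpos z).le _) (Real.rpow_nonneg (hQpos z).le _)
  -- rewrite the goal
  unfold expRenyi
  have e1 : α/γ - 1 = (α-γ)/γ := by field_simp
  have e2 : (α-γ)/(1-γ) - 1 = (α-1)/(1-γ) := by field_simp; ring
  rw [e1, e2, one_div_one_div, one_div_one_div] at key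
  rw [← Real.rpow_mul hS0, ← Real.rpow_mul hS1, ← Real.rpow_mul hS2, e1, e2,
    one_div_div, one_div_div,
    div_mul_cancel₀ _ hαγ.ne', div_mul_cancel₀ _ hα1.ne',
    div_mul_cancel₀ _ hα1.ne', Real.rpow_one]
  exact hLHS ▸ key
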